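/- Let A ∈ ℝ^{m×n} with compact SVD A = UΣVᵀ, σ₁(Σ) = 1. Let X ∈ St(m,r), Y ∈ St(n,r), Θ = XᵀAY, and define the Riemannian gradient E = −(I_m − XXᵀ)AYΘᵀ. Then with Φ = UᵀX and Ψ = VᵀY, the matrix EᵀE satisfies σ₁(EᵀE) ≤ σ₁(I_{r_A} − ΦΦᵀ). -/

import Mathlib

open Matrix

/-- Spectral norm of a real matrix: square root of the largest eigenvalue of `Mᵀ M`.
For a positive semidefinite matrix this is its largest eigenvalue `σ₁`. -/
noncomputable def specNorm {a b : ℕ} (M : Matrix (Fin a) (Fin b) ℝ) : ℝ :=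
  Real.sqrt (sSup {e : ℝ | Module.End.HasEigenvalue (Matrix.toLin' (Mᵀ * M)) e})

section Aux

variable {a b : ℕ}

lemma nsq_nonneg (v : Fin a → ℝ) : 0 ≤ v ⬝ᵥ v :=
  Finset.sum_nonneg fun _ _ => mul_self_nonneg _

lemma spec_set_eq (N : Matrix (Fin a) (Fin a) ℝ) :
    {e : ℝ | Module.End.HasEigenvalue (Matrix.toLin' N) e} = spectrum ℝ N := by
  have h : spectrum ℝ (Matrix.toLin' N) = spectrum ℝ N :=
    AlgEquiv.spectrum_eq (Matrix.toLinAlgEquiv (Pi.basisFun ℝ (Fin a))) N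
  ext e
  rw [Set.mem_setOf_eq, Module.End.hasEigenvalue_iff_mem_spectrum, ← h]

lemma specNorm_eq (M : Matrix (Fin a) (Fin b) ℝ) :
    specNorm M = Real.sqrt (sSup (spectrum ℝ (Mᵀ * M))) := by
  rw [specNorm, spec_set_eq]

lemma nsq_mulVec (M : Matrix (Fin a) (Fin b) ℝ) (v : Fin b → ℝ) :
    (M *ᵥ v) ⬝ᵥ (M *ᵥ v) = v ⬝ᵥ ((Mᵀ * M) *ᵥ v) := by
  have h : v ⬝ᵥ ((Mᵀ * M) *ᵥ v) = (M *ᵥ v) ⬝ᵥ (M *ᵥ v) := by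
    rw [← Matrix.mulVec_mulVec, Matrix.dotProduct_mulVec, Matrix.vecMul_transpose]
  exact h.symm

lemma nsq_mulVec_eq {M : Matrix (Fin a) (Fin b) ℝ} (hM : Mᵀ * M = 1) (v : Fin b → ℝ) :
    (M *ᵥ v) ⬝ᵥ (M *ᵥ v) = v ⬝ᵥ v := by
  rw [nsq_mulVec, hM, Matrix.one_mulVec]

lemma nsq_transpose_le {M : Matrix (Fin a) (Fin b) ℝ} (hM : Mᵀ * M = 1) (v : Fin a → ℝ) :
    (Mᵀ *ᵥ v) ⬝ᵥ (Mᵀ *ᵥ v) ≤ v ⬝ᵥ v := by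
  set w : Fin b → ℝ := Mᵀ *ᵥ v with hw
  have h1 : v ⬝ᵥ (M *ᵥ w) = w ⬝ᵥ w := by
    rw [Matrix.dotProduct_mulVec, ← Matrix.mulVec_transpose, ← hw]
  have hcs : (v ⬝ᵥ (M *ᵥ w)) * (v ⬝ᵥ (M *ᵥ w)) ≤ (v ⬝ᵥ v) * ((M *ᵥ w) ⬝ᵥ (M *ᵥ w)) := by
    have := Finset.sum_mul_sq_le_sq_mul_sq Finset.univ v (M *ᵥ w)
    simpa [dotProduct, pow_two] using this
  have h2 : (M *ᵥ w) ⬝ᵥ (M *ᵥ w) = w ⬝ᵥ w := nsq_mulVec_eq hM w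
  rw [h1, h2] at hcs
  nlinarith [nsq_nonneg w, nsq_nonneg v]

lemma nsq_diagonal_le (d : Fin a → ℝ) (c : ℝ) (hd : ∀ i, |d i| ≤ c) (v : Fin a → ℝ) :
    (diagonal d *ᵥ v) ⬝ᵥ (diagonal d *ᵥ v) ≤ (c * c) * (v ⬝ᵥ v) := by
  simp only [dotProduct, Matrix.mulVec_diagonal, Finset.mul_sum]
  refine Finset.sum_le_sum fun i _ => ?_
  have h1 : d i * d i ≤ c * c := by
    have := hd i
    have := abs_nonneg (d i)
    nlinarith [abs_mul_abs_self (d i)]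
  nlinarith [mul_self_nonneg (v i)]

lemma spec_finite {N : Matrix (Fin a) (Fin a) ℝ} (hN : N.IsHermitian) :
    (spectrum ℝ N).Finite := by
  rw [hN.spectrum_real_eq_range_eigenvalues]; exact Set.finite_range _

lemma eigen_pick {N : Matrix (Fin a) (Fin a) ℝ} (hN : N.IsHermitian) {μ : ℝ}
    (hμ : μ ∈ spectrum ℝ N) :
    ∃ v : Fin a → ℝ, v ⬝ᵥ v = 1 ∧ N *ᵥ v = μ • v := by
  rw [hN.spectrum_real_eq_range_eigenvalues] at hμ
  obtain ⟨i, rfl⟩ := hμ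
  refine ⟨(WithLp.equiv 2 _) (hN.eigenvectorBasis i), ?_, hN.mulVec_eigenvectorBasis i⟩
  have hnorm : ‖hN.eigenvectorBasis i‖ = 1 := hN.eigenvectorBasis.orthonormal.1 i
  rw [EuclideanSpace.norm_eq] at hnorm
  have h := Real.sqrt_eq_one.mp hnorm
  simpa [dotProduct, Real.norm_eq_abs, sq_abs, pow_two] using h

lemma mem_spec_of_eigenvec (N : Matrix (Fin a) (Fin a) ℝ) {μ : ℝ} {v : Fin a → ℝ}
    (hv : v ≠ 0) (h : N *ᵥ v = μ • v) : μ ∈ spectrum ℝ N := by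
  rw [← spec_set_eq]
  exact Module.End.hasEigenvalue_of_hasEigenvector
    ⟨Module.End.mem_eigenspace_iff.mpr (by rw [Matrix.toLin'_apply, h]), hv⟩

lemma psd_mulVec_le {N : Matrix (Fin a) (Fin a) ℝ} (hN : N.PosSemidef) (v : Fin a → ℝ) :
    (N *ᵥ v) ⬝ᵥ (N *ᵥ v) ≤
      (sSup (spectrum ℝ N) * sSup (spectrum ℝ N)) * (v ⬝ᵥ v) := by
  set lam := sSup (spectrum ℝ N) with hlam
  have hH := hN.1
  set Q : Matrix (Fin a) (Fin a) ℝ := (hH.eigenvectorUnitary : Matrix (Fin a) (Fin a) ℝ) with hQ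
  have hQ1 : Qᵀ * Q = 1 := by
    have := (Unitary.mem_iff.mp hH.eigenvectorUnitary.2).1
    rwa [Matrix.star_eq_conjTranspose, Matrix.conjTranspose_eq_transpose_of_trivial] at this
  have hQ2 : Q * Qᵀ = 1 := by
    have := (Unitary.mem_iff.mp hH.eigenvectorUnitary.2).2
    rwa [Matrix.star_eq_conjTranspose, Matrix.conjTranspose_eq_transpose_of_trivial] at this
  have hQ2' : Qᵀᵀ * Qᵀ = 1 := by rwa [Matrix.transpose_transpose]
  have hev : ∀ i, |hH.eigenvalues i| ≤ lam := by
    intro i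
    rw [abs_of_nonneg (hN.eigenvalues_nonneg i)]
    exact le_csSup (spec_finite hH).bddAbove
      (by rw [hH.spectrum_real_eq_range_eigenvalues]; exact ⟨i, rfl⟩)
  have hof : (RCLike.ofReal ∘ hH.eigenvalues : Fin a → ℝ) = hH.eigenvalues := by
    ext i; simp
  have hNv : N *ᵥ v = Q *ᵥ (diagonal hH.eigenvalues *ᵥ (Qᵀ *ᵥ v)) := by
    conv_lhs => rw [hH.spectral_theorem]
    rw [Unitary.conjStarAlgAut_apply, Matrix.star_eq_conjTranspose, Matrix.conjTranspose_eq_transpose_of_trivial, hof, ← hQ]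
    simp only [← Matrix.mulVec_mulVec]
  rw [hNv, nsq_mulVec_eq hQ1]
  calc (diagonal hH.eigenvalues *ᵥ (Qᵀ *ᵥ v)) ⬝ᵥ (diagonal hH.eigenvalues *ᵥ (Qᵀ *ᵥ v))
      ≤ (lam * lam) * ((Qᵀ *ᵥ v) ⬝ᵥ (Qᵀ *ᵥ v)) := nsq_diagonal_le _ lam hev _
    _ = (lam * lam) * (v ⬝ᵥ v) := by rw [nsq_mulVec_eq hQ2' v]

lemma cancel_orth {k l q : ℕ} (M : Matrix (Fin k) (Fin l) ℝ) (h : Mᵀ * M = 1)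
    (Z : Matrix (Fin l) (Fin q) ℝ) : Mᵀ * (M * Z) = Z := by
  rw [← Matrix.mul_assoc, h, Matrix.one_mul]

end Aux

/-- With `A = U Σ Vᵀ` a compact SVD with `σ₁(Σ) = 1`, `X ∈ St(m,r)`, `Y ∈ St(n,r)`,
`Θ = Xᵀ A Y` and Riemannian gradient `E = −(I − XXᵀ) A Y Θᵀ`, one has
`σ₁(EᵀE) ≤ σ₁(I − ΦΦᵀ)` where `Φ = Uᵀ X`. -/
theorem riemannian_grad_norm_bound {m n r rA : ℕ} (hr : rA ≤ r)
    (U : Matrix (Fin m) (Fin rA) ℝ) (hU : Uᵀ * U = 1)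
    (V : Matrix (Fin n) (Fin rA) ℝ) (hV : Vᵀ * V = 1)
    (S : Matrix (Fin rA) (Fin rA) ℝ) (hSd : S.IsDiag) (hSpos : ∀ i, 0 < S i i)
    (hS1 : specNorm S = 1)
    (X : Matrix (Fin m) (Fin r) ℝ) (hX : Xᵀ * X = 1)
    (Y : Matrix (Fin n) (Fin r) ℝ) (hY : Yᵀ * Y = 1)
    (A : Matrix (Fin m) (Fin n) ℝ) (hA : A = U * S * Vᵀ)
    (Θ : Matrix (Fin r) (Fin r) ℝ) (hΘ : Θ = Xᵀ * A * Y)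
    (E : Matrix (Fin m) (Fin r) ℝ) (hE : E = -((1 - X * Xᵀ) * A * Y * Θᵀ)) :
    specNorm (Eᵀ * E) ≤ specNorm (1 - (Uᵀ * X) * (Uᵀ * X)ᵀ) := by
  have hSt : Sᵀ = S := by rw [← hSd.diagonal_diag, Matrix.diagonal_transpose]
  -- diagonal entries of `S` are bounded by 1
  have hd1 : ∀ i, |S.diag i| ≤ 1 := by
    have h1 : Real.sqrt (sSup (spectrum ℝ (Sᵀ * S))) = 1 := by
      rw [← specNorm_eq]; exact hS1
    have h2 : Sᵀ * S = diagonal (fun i => S.diag i * S.diag i) := by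
      rw [hSt]
      conv_lhs => rw [← hSd.diagonal_diag]
      rw [Matrix.diagonal_mul_diagonal]
    have h3 : sSup (Set.range fun i => S.diag i * S.diag i) = 1 := by
      rw [← spectrum_diagonal (R := ℝ) (fun i => S.diag i * S.diag i), ← h2]
      exact Real.sqrt_eq_one.mp h1
    intro i
    have h4 : S.diag i * S.diag i ≤ 1 := by
      rw [← h3]
      exact le_csSup (Set.finite_range _).bddAbove ⟨i, rfl⟩
    have h5 : (0:ℝ) < S.diag i := hSpos i
    rw [abs_le]; constructor <;> nlinarith
  have nsqS : ∀ u : Fin rA → ℝ, (S *ᵥ u) ⬝ᵥ (S *ᵥ u) ≤ u ⬝ᵥ u := by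
    intro u
    have h := nsq_diagonal_le S.diag 1 hd1 u
    rw [hSd.diagonal_diag] at h
    simpa using h
  set P : Matrix (Fin rA) (Fin rA) ℝ := 1 - (Uᵀ * X) * (Uᵀ * X)ᵀ with hP
  set W : Matrix (Fin r) (Fin rA) ℝ := Θ * Yᵀ * V * S with hW
  set G : Matrix (Fin r) (Fin r) ℝ := Eᵀ * E with hG
  -- key algebraic identity
  have key : G = W * P * Wᵀ := by
    rw [hG, hW, hP, hE, hA]
    simp only [Matrix.transpose_neg, Matrix.transpose_mul, Matrix.transpose_sub,
      Matrix.transpose_one, Matrix.transpose_transpose, hSt, Matrix.neg_mul,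
      Matrix.mul_neg, neg_neg]
    simp only [Matrix.sub_mul, Matrix.mul_sub, Matrix.mul_one, Matrix.one_mul,
      Matrix.mul_assoc]
    simp only [cancel_orth U hU, cancel_orth V hV, cancel_orth X hX]
    abel
  -- norm contraction through Θ, Θᵀ, W, Wᵀ
  have nsqT : ∀ u : Fin r → ℝ, (Θ *ᵥ u) ⬝ᵥ (Θ *ᵥ u) ≤ u ⬝ᵥ u := by
    intro u
    have h : Θ *ᵥ u = Xᵀ *ᵥ (U *ᵥ (S *ᵥ (Vᵀ *ᵥ (Y *ᵥ u)))) := by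
      rw [hΘ, hA]; simp only [← Matrix.mulVec_mulVec]
    rw [h]
    refine le_trans (nsq_transpose_le hX _) ?_
    rw [nsq_mulVec_eq hU]
    refine le_trans (nsqS _) ?_
    refine le_trans (nsq_transpose_le hV _) ?_
    rw [nsq_mulVec_eq hY]
  have nsqTT : ∀ u : Fin r → ℝ, (Θᵀ *ᵥ u) ⬝ᵥ (Θᵀ *ᵥ u) ≤ u ⬝ᵥ u := by
    intro u
    have h : Θᵀ *ᵥ u = Yᵀ *ᵥ (V *ᵥ (S *ᵥ (Uᵀ *ᵥ (X *ᵥ u)))) := by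
      rw [hΘ, hA]
      simp only [Matrix.transpose_mul, Matrix.transpose_transpose, hSt,
        ← Matrix.mulVec_mulVec]
    rw [h]
    refine le_trans (nsq_transpose_le hY _) ?_
    rw [nsq_mulVec_eq hV]
    refine le_trans (nsqS _) ?_
    refine le_trans (nsq_transpose_le hU _) ?_
    rw [nsq_mulVec_eq hX]
  have nsqW : ∀ u : Fin rA → ℝ, (W *ᵥ u) ⬝ᵥ (W *ᵥ u) ≤ u ⬝ᵥ u := by
    intro u
    have h : W *ᵥ u = Θ *ᵥ (Yᵀ *ᵥ (V *ᵥ (S *ᵥ u))) := by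
      rw [hW]; simp only [← Matrix.mulVec_mulVec]
    rw [h]
    refine le_trans (nsqT _) ?_
    refine le_trans (nsq_transpose_le hY _) ?_
    rw [nsq_mulVec_eq hV]
    exact nsqS _
  have nsqWT : ∀ u : Fin r → ℝ, (Wᵀ *ᵥ u) ⬝ᵥ (Wᵀ *ᵥ u) ≤ u ⬝ᵥ u := by
    intro u
    have h : Wᵀ *ᵥ u = S *ᵥ (Vᵀ *ᵥ (Y *ᵥ (Θᵀ *ᵥ u))) := by
      rw [hW]
      simp only [Matrix.transpose_mul, Matrix.transpose_transpose, hSt,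
        ← Matrix.mulVec_mulVec]
    rw [h]
    refine le_trans (nsqS _) ?_
    refine le_trans (nsq_transpose_le hV _) ?_
    rw [nsq_mulVec_eq hY]
    exact nsqTT _
  -- P is hermitian and PSD
  have hPt : Pᵀ = P := by
    rw [hP]
    simp [Matrix.transpose_sub, Matrix.transpose_mul, Matrix.transpose_transpose]
  have hPH : P.IsHermitian := by
    show Pᴴ = P
    rw [Matrix.conjTranspose_eq_transpose_of_trivial, hPt]
  have hPsd : P.PosSemidef := by
    refine .of_dotProduct_mulVec_nonneg hPH fun x => ?_
    have h1 : ((Uᵀ * X)ᵀ *ᵥ x) ⬝ᵥ ((Uᵀ * X)ᵀ *ᵥ x) = x ⬝ᵥ (((Uᵀ * X) * (Uᵀ * X)ᵀ) *ᵥ x) := by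
      rw [nsq_mulVec ((Uᵀ * X)ᵀ) x, Matrix.transpose_transpose]
    have h2 : ((Uᵀ * X)ᵀ *ᵥ x) ⬝ᵥ ((Uᵀ * X)ᵀ *ᵥ x) ≤ x ⬝ᵥ x := by
      have h3 : (Uᵀ * X)ᵀ *ᵥ x = Xᵀ *ᵥ (U *ᵥ x) := by
        simp only [Matrix.transpose_mul, Matrix.transpose_transpose,
          ← Matrix.mulVec_mulVec]
      rw [h3]
      refine le_trans (nsq_transpose_le hX _) ?_
      rw [nsq_mulVec_eq hU]
    have h4 : x ⬝ᵥ (P *ᵥ x) = x ⬝ᵥ x - x ⬝ᵥ (((Uᵀ * X) * (Uᵀ * X)ᵀ) *ᵥ x) := by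
      rw [hP, Matrix.sub_mulVec, Matrix.one_mulVec, dotProduct_sub]
    simp only [RCLike.re_to_real, star_trivial]
    rw [h4]
    linarith [h1 ▸ h2]
  set lam : ℝ := sSup (spectrum ℝ P) with hlam
  have hlam0 : 0 ≤ lam := by
    rcases isEmpty_or_nonempty (Fin rA) with he | hne
    · have h : spectrum ℝ P = ∅ := by
        rw [hPH.spectrum_real_eq_range_eigenvalues]
        exact Set.range_eq_empty _
      rw [hlam, h, Real.sSup_empty]
    · have hmem : lam ∈ spectrum ℝ P := by
        refine Set.Nonempty.csSup_mem ?_ (spec_finite hPH)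
        rw [hPH.spectrum_real_eq_range_eigenvalues]
        exact Set.range_nonempty _
      rw [hPH.spectrum_real_eq_range_eigenvalues] at hmem
      obtain ⟨i, hi⟩ := hmem
      rw [← hi]
      exact hPsd.eigenvalues_nonneg i
  -- G and G*G hermitian
  have hGt : Gᵀ = G := by
    rw [hG]; simp [Matrix.transpose_mul, Matrix.transpose_transpose]
  have hGGH : (G * G).IsHermitian := by
    show (G * G)ᴴ = G * G
    rw [Matrix.conjTranspose_eq_transpose_of_trivial, Matrix.transpose_mul, hGt]
  -- every spectral value of G*G is at most lam^2
  have hbound : ∀ μ ∈ spectrum ℝ (G * G), μ ≤ lam * lam := by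
    intro μ hμ
    obtain ⟨v, hv1, hveq⟩ := eigen_pick hGGH hμ
    have h7 : (G *ᵥ v) ⬝ᵥ (G *ᵥ v) = μ := by
      rw [nsq_mulVec, hGt, ← Matrix.mulVec_mulVec, Matrix.mulVec_mulVec, hveq,
        dotProduct_smul, hv1, smul_eq_mul, mul_one]
    have h8 : G *ᵥ v = W *ᵥ (P *ᵥ (Wᵀ *ᵥ v)) := by
      rw [key]; simp only [← Matrix.mulVec_mulVec]
    rw [← h7, h8]
    calc (W *ᵥ (P *ᵥ (Wᵀ *ᵥ v))) ⬝ᵥ (W *ᵥ (P *ᵥ (Wᵀ *ᵥ v)))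
        ≤ (P *ᵥ (Wᵀ *ᵥ v)) ⬝ᵥ (P *ᵥ (Wᵀ *ᵥ v)) := nsqW _
      _ ≤ (lam * lam) * ((Wᵀ *ᵥ v) ⬝ᵥ (Wᵀ *ᵥ v)) := psd_mulVec_le hPsd _
      _ ≤ (lam * lam) * (v ⬝ᵥ v) :=
          mul_le_mul_of_nonneg_left (nsqWT v) (mul_self_nonneg lam)
      _ = lam * lam := by rw [hv1, mul_one]
  -- conclude
  have hL : specNorm (Eᵀ * E) ≤ lam := by
    rw [← hG, specNorm_eq, hGt]
    calc Real.sqrt (sSup (spectrum ℝ (G * G))) ≤ Real.sqrt (lam * lam) :=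
          Real.sqrt_le_sqrt (Real.sSup_le hbound (mul_self_nonneg lam))
      _ = lam := Real.sqrt_mul_self hlam0
  have hR : lam ≤ specNorm P := by
    rw [specNorm_eq, hPt]
    rcases isEmpty_or_nonempty (Fin rA) with he | hne
    · have h : lam = 0 := by
        have h' : spectrum ℝ P = ∅ := by
          rw [hPH.spectrum_real_eq_range_eigenvalues]; exact Set.range_eq_empty _
        rw [hlam, h', Real.sSup_empty]
      rw [h]; exact Real.sqrt_nonneg _
    · have hmem : lam ∈ spectrum ℝ P := by
        refine Set.Nonempty.csSup_mem ?_ (spec_finite hPH)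
        rw [hPH.spectrum_real_eq_range_eigenvalues]
        exact Set.range_nonempty _
      obtain ⟨v, hv1, hveq⟩ := eigen_pick hPH hmem
      have hv0 : v ≠ 0 := by
        intro h0
        rw [h0] at hv1
        simp at hv1
      have hPP : (P * P) *ᵥ v = (lam * lam) • v := by
        rw [← Matrix.mulVec_mulVec, hveq, Matrix.mulVec_smul, hveq, smul_smul]
      have hPPH : (P * P).IsHermitian := by
        show (P * P)ᴴ = P * P
        rw [Matrix.conjTranspose_eq_transpose_of_trivial, Matrix.transpose_mul, hPt]
      have hmem2 : lam * lam ∈ spectrum ℝ (P * P) := mem_spec_of_eigenvec _ hv0 hPP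
      have hle : lam * lam ≤ sSup (spectrum ℝ (P * P)) :=
        le_csSup (spec_finite hPPH).bddAbove hmem2
      have hy : 0 ≤ sSup (spectrum ℝ (P * P)) := le_trans (mul_self_nonneg lam) hle
      exact (Real.le_sqrt hlam0 hy).mpr (by rw [pow_two]; exact hle)
  exact le_trans hL hR
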